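/- (Norm bound.) Let p : ℝ^d → ℝ be a multivariate polynomial. Then there exists a square-summable family c = (c_α) ∈ ℓ², indexed by d-tuples α of non-negative integers, such that for every x ∈ ℝ^d with ‖x‖ ≤ 1 the family (c_α·φ(x)_α) is summable with Σ_α c_α·φ(x)_α = p(x), and ‖c‖_{ℓ²} ≤ 2^{deg(p)/2}·‖p‖. -/
import Mathlib


open Finset

/-- The coefficient norm `‖p‖ = sqrt (Σ_α c_α²)` of a multivariate polynomial. -/
noncomputable def mvNorm {d : ℕ} (p : MvPolynomial (Fin d) ℝ) : ℝ :=
  Real.sqrt (∑ α ∈ p.support, (MvPolynomial.coeff α p) ^ 2)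

/-- The feature map `φ` of the rational kernel: for `x ∈ ℝ^d` and a multi-index
`α = (α_1,…,α_d)`,
`φ(x)_α = x_1^{α_1}⋯x_d^{α_d} · sqrt(2^{−Σα_i} · (Σα_i)! / Πα_i!)`. -/
noncomputable def phi {d : ℕ} (x : EuclideanSpace ℝ (Fin d)) (α : Fin d → ℕ) : ℝ :=
  (∏ i, x i ^ α i) *
    Real.sqrt ((2 : ℝ)⁻¹ ^ (∑ i, α i) *
      ((∑ i, α i).factorial : ℝ) / ∏ i, ((α i).factorial : ℝ))

/-- The weight under the square root in `phi`. -/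
noncomputable def sWeight {d : ℕ} (α : Fin d → ℕ) : ℝ :=
  (2 : ℝ)⁻¹ ^ (∑ i, α i) * ((∑ i, α i).factorial : ℝ) / ∏ i, ((α i).factorial : ℝ)

lemma sWeight_pos {d : ℕ} (α : Fin d → ℕ) : 0 < sWeight α := by
  unfold sWeight
  have h1 : (0:ℝ) < (2 : ℝ)⁻¹ ^ (∑ i, α i) := by positivity
  have h2 : (0:ℝ) < ((∑ i, α i).factorial : ℝ) := by
    exact_mod_cast (∑ i, α i).factorial_pos
  have h3 : (0:ℝ) < ∏ i, ((α i).factorial : ℝ) := by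
    apply Finset.prod_pos; intro i _; exact_mod_cast (α i).factorial_pos
  positivity

lemma inv_sWeight_le {d : ℕ} (α : Fin d → ℕ) (n : ℕ) (h : ∑ i, α i ≤ n) :
    (sWeight α)⁻¹ ≤ 2 ^ n := by
  have hfac : ((1:ℝ)) ≤ ((∑ i, α i).factorial : ℝ) / ∏ i, ((α i).factorial : ℝ) := by
    rw [le_div_iff₀ (by positivity), one_mul]
    exact_mod_cast Nat.le_of_dvd (Nat.factorial_pos _)
      (Nat.prod_factorial_dvd_factorial_sum _ _)
  have hs : (2:ℝ)⁻¹ ^ n ≤ sWeight α := by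
    unfold sWeight
    rw [mul_div_assoc]
    calc (2:ℝ)⁻¹ ^ n ≤ (2:ℝ)⁻¹ ^ (∑ i, α i) := by
          apply pow_le_pow_of_le_one (by norm_num) (by norm_num) h
      _ ≤ _ := le_mul_of_one_le_right (by positivity) hfac
  calc (sWeight α)⁻¹ ≤ ((2:ℝ)⁻¹ ^ n)⁻¹ :=
        inv_anti₀ (by positivity) hs
    _ = 2 ^ n := by rw [← inv_pow, inv_inv]

/-- (Norm bound.) For every multivariate polynomial `p` there exists
a square-summable family `c ∈ ℓ²` such that `⟨c, φ(x)⟩ = p(x)` whenever `‖x‖ ≤ 1`, and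
`‖c‖_{ℓ²} ≤ 2^{deg(p)/2}·‖p‖`. -/
theorem exists_l2_repr_of_mvPolynomial {d : ℕ} (p : MvPolynomial (Fin d) ℝ) :
    ∃ c : (Fin d → ℕ) → ℝ,
      Summable (fun α => (c α) ^ 2) ∧
      (∀ x : EuclideanSpace ℝ (Fin d), ‖x‖ ≤ 1 →
        Summable (fun α => c α * phi x α) ∧
        (∑' α : Fin d → ℕ, c α * phi x α) = MvPolynomial.eval (fun i => x i) p) ∧
      Real.sqrt (∑' α : Fin d → ℕ, (c α) ^ 2)
        ≤ (2 : ℝ) ^ ((p.totalDegree : ℝ) / 2) * mvNorm p := by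
  classical
  set e : (Fin d →₀ ℕ) ≃ (Fin d → ℕ) := Finsupp.equivFunOnFinite with he
  set c : (Fin d → ℕ) → ℝ :=
    fun α => MvPolynomial.coeff (e.symm α) p / Real.sqrt (sWeight α) with hc
  set t : Finset (Fin d → ℕ) := p.support.image e with ht
  have hczero : ∀ α ∉ t, c α = 0 := by
    intro α hα
    have : e.symm α ∉ p.support := by
      intro hmem
      exact hα (Finset.mem_image.2 ⟨e.symm α, hmem, e.apply_symm_apply α⟩)
    simp only [hc, MvPolynomial.mem_support_iff, not_not] at this ⊢
    rw [this]; simp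
  have hsqrt_ne : ∀ α : Fin d → ℕ, Real.sqrt (sWeight α) ≠ 0 := fun α =>
    ne_of_gt (Real.sqrt_pos.2 (sWeight_pos α))
  refine ⟨c, ?_, ?_, ?_⟩
  · exact summable_of_ne_finset_zero (s := t) (fun α hα => by rw [hczero α hα]; ring)
  · intro x _
    have hterm : ∀ α : Fin d → ℕ,
        c α * phi x α = MvPolynomial.coeff (e.symm α) p * ∏ i, x i ^ α i := by
      intro α
      have hsq : Real.sqrt (sWeight α) * Real.sqrt (sWeight α) = sWeight α :=
        Real.mul_self_sqrt (sWeight_pos α).le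
      simp only [hc, phi]
      rw [div_mul_eq_mul_div]
      rw [show (2 : ℝ)⁻¹ ^ (∑ i, α i) * ((∑ i, α i).factorial : ℝ) /
          ∏ i, ((α i).factorial : ℝ) = sWeight α from rfl]
      rw [mul_div_assoc, mul_div_cancel_right₀ _ (hsqrt_ne α)]
    constructor
    · exact summable_of_ne_finset_zero (s := t)
        (fun α hα => by rw [hczero α hα]; ring)
    · rw [tsum_eq_sum (s := t) (fun α hα => by rw [hczero α hα]; ring)]
      rw [ht, Finset.sum_image (fun a _ b _ h => e.injective h)]
      rw [MvPolynomial.eval_eq']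
      apply Finset.sum_congr rfl
      intro β _
      rw [hterm, Equiv.symm_apply_apply]
      rfl
  · rw [tsum_eq_sum (s := t) (fun α hα => by rw [hczero α hα]; ring)]
    rw [ht, Finset.sum_image (fun a _ b _ h => e.injective h)]
    have hsum_le : ∑ β ∈ p.support, (c (e β)) ^ 2
        ≤ 2 ^ p.totalDegree * ∑ β ∈ p.support, (MvPolynomial.coeff β p) ^ 2 := by
      rw [Finset.mul_sum]
      apply Finset.sum_le_sum
      intro β hβ
      have hdeg : ∑ i, (e β) i ≤ p.totalDegree := by
        have := MvPolynomial.le_totalDegree hβ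
        rwa [Finsupp.sum_fintype _ _ (fun _ => rfl)] at this
      have hcoe : c (e β) = MvPolynomial.coeff β p / Real.sqrt (sWeight (e β)) := by
        simp [hc]
      rw [hcoe, div_pow, Real.sq_sqrt (sWeight_pos _).le, div_eq_mul_inv, mul_comm]
      apply mul_le_mul_of_nonneg_right _ (sq_nonneg _)
      exact inv_sWeight_le _ _ hdeg
    calc Real.sqrt (∑ β ∈ p.support, (c (e β)) ^ 2)
        ≤ Real.sqrt (2 ^ p.totalDegree * ∑ β ∈ p.support, (MvPolynomial.coeff β p) ^ 2) :=
          Real.sqrt_le_sqrt hsum_le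
      _ = Real.sqrt (2 ^ p.totalDegree) * mvNorm p := by
          rw [Real.sqrt_mul (by positivity)]; rfl
      _ = (2 : ℝ) ^ ((p.totalDegree : ℝ) / 2) * mvNorm p := by
          congr 1
          rw [Real.sqrt_eq_rpow, ← Real.rpow_natCast 2 p.totalDegree,
            ← Real.rpow_mul (by norm_num)]
          ring_nf
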